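/- Let F be a field, n ≥ 1, and K ≥ 2 an integer. Then the number of monomial ideals in M_n(K) satisfies |M_n(K)| ≤ K^n · (K + n − 2)^{(n−1)(K−1)} · (2K − 3)^{K−2}. -/

import Mathlib

open MvPolynomial

namespace MonAux

/-- Decoder sequence: builds points of a downset from a code. -/
noncomputable def esq {n : ℕ} (c : ℕ → ℕ × Fin n) : ℕ → (Fin n →₀ ℕ)
  | 0 => 0
  | (j+1) => esq c (min (c j).1 j) + Finsupp.single (c j).2 1
decreasing_by exact Nat.lt_succ_of_le (min_le_right _ _)

lemma esq_zero {n : ℕ} (c : ℕ → ℕ × Fin n) : esq c 0 = 0 := by rw [esq]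

lemma esq_succ {n : ℕ} (c : ℕ → ℕ × Fin n) (j : ℕ) :
    esq c (j+1) = esq c (min (c j).1 j) + Finsupp.single (c j).2 1 := by rw [esq]

lemma esq_congr {n : ℕ} (c c' : ℕ → ℕ × Fin n) :
    ∀ j, (∀ i, i < j → c i = c' i) → esq c j = esq c' j := by
  intro j
  induction j using Nat.strong_induction_on with
  | _ j ih =>
    intro h
    match j with
    | 0 => rw [esq_zero, esq_zero]
    | (j+1) =>
      rw [esq_succ, esq_succ, h j (Nat.lt_succ_self _),
        ih (min (c' j).1 j) (Nat.lt_succ_of_le (min_le_right _ _))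
          (fun i hi => h i (lt_of_lt_of_le hi (Nat.le_succ_of_le (min_le_right _ _))))]

end MonAux

namespace MonAux

lemma exists_code {n : ℕ} (hn : 1 ≤ n) :
    ∀ (m : ℕ) (D : Finset (Fin n →₀ ℕ)),
      (∀ a b : Fin n →₀ ℕ, a ≤ b → b ∈ D → a ∈ D) → D.card = m + 1 →
      ∃ c : ℕ → ℕ × Fin n, (∀ j, (c j).1 ≤ j) ∧
        (↑D : Set (Fin n →₀ ℕ)) = esq c '' {j | j ≤ m} := by
  intro m
  induction m with
  | zero =>
    intro D hdown hcard
    obtain ⟨a, ha⟩ := Finset.card_eq_one.mp hcard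
    have h0 : (0 : Fin n →₀ ℕ) ∈ D := hdown 0 a zero_le (by simp [ha])
    have ha0 : a = 0 := by
      rw [ha] at h0; exact (Finset.mem_singleton.mp h0).symm
    refine ⟨fun _ => (0, ⟨0, hn⟩), fun j => Nat.zero_le _, ?_⟩
    ext x
    simp [ha, ha0, Set.eq_singleton_iff_unique_mem, Nat.le_zero, esq_zero, eq_comm]
  | succ m ih =>
    intro D hdown hcard
    -- pick a maximal element of D.erase 0
    have hne : (D.erase 0).Nonempty := by
      rw [← Finset.card_pos, Finset.card_erase_of_mem]
      · omega
      · obtain ⟨y, hy⟩ := Finset.card_pos.mp (by omega : 0 < D.card)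
        exact hdown 0 y zero_le hy
    obtain ⟨x, hxm⟩ := Finset.exists_maximal hne
    have hx := hxm.1
    have hxmax : ∀ y ∈ D.erase 0, ¬ x < y := fun y hy hlt => absurd (hxm.2 hy hlt.le) (not_le_of_gt hlt)
    have hxD : x ∈ D := Finset.mem_of_mem_erase hx
    have hx0 : x ≠ 0 := Finset.ne_of_mem_erase hx
    -- x has a positive coordinate i
    have hex : ∃ i, x i ≠ 0 := by
      by_contra hc
      push_neg at hc
      exact hx0 (Finsupp.ext hc)
    obtain ⟨i, hi⟩ := hex
    set p : Fin n →₀ ℕ := x - Finsupp.single i 1 with hp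
    have hple : p ≤ x := tsub_le_self
    have hpx : p + Finsupp.single i 1 = x := by
      rw [hp]
      exact tsub_add_cancel_of_le (Finsupp.single_le_iff.mpr (by omega))
    have hpne : p ≠ x := by
      intro h
      have := congrArg (fun f : Fin n →₀ ℕ => f i) hpx
      simp only [Finsupp.add_apply, Finsupp.single_eq_same] at this
      rw [h] at this
      omega
    -- D' = D.erase x is a downset of card m+1
    set D' := D.erase x with hD'
    have hdown' : ∀ a b : Fin n →₀ ℕ, a ≤ b → b ∈ D' → a ∈ D' := by
      intro a b hab hb
      have hbD : b ∈ D := Finset.mem_of_mem_erase hb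
      have hbx : b ≠ x := Finset.ne_of_mem_erase hb
      refine Finset.mem_erase.mpr ⟨?_, hdown a b hab hbD⟩
      intro hax
      subst hax
      have hb0 : b ≠ 0 := by
        intro h
        subst h
        exact hx0 (le_antisymm hab zero_le)
      exact hxmax b (Finset.mem_erase.mpr ⟨hb0, hbD⟩) (lt_of_le_of_ne hab (Ne.symm hbx))
    have hcard' : D'.card = m + 1 := by
      rw [hD', Finset.card_erase_of_mem hxD]; omega
    obtain ⟨c', hc'bd, hc'⟩ := ih D' hdown' hcard'
    -- p is in D'
    have hpD' : p ∈ D' := Finset.mem_erase.mpr ⟨hpne, hdown p x hple hxD⟩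
    have : (p : Fin n →₀ ℕ) ∈ esq c' '' {j | j ≤ m} := by
      rw [← hc']; exact_mod_cast hpD'
    obtain ⟨j0, hj0m, hj0⟩ := this
    -- new code
    set c : ℕ → ℕ × Fin n := Function.update c' m (j0, i) with hc
    have hj0m' : j0 ≤ m := hj0m
    have hagree : ∀ k, k < m → c k = c' k := by
      intro k hk
      rw [hc, Function.update_of_ne (by omega)]
    have hesq_eq : ∀ j, j ≤ m → esq c j = esq c' j := by
      intro j hj
      exact esq_congr c c' j (fun k hk => hagree k (by omega))
    refine ⟨c, ?_, ?_⟩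
    · intro j
      by_cases hj : j = m
      · subst hj
        rw [hc]
        simpa using hj0m'
      · rw [hc, Function.update_of_ne hj]
        exact hc'bd j
    · have htop : esq c (m + 1) = x := by
        have h1 : c m = (j0, i) := by rw [hc]; simp
        rw [esq_succ, h1]
        have hmin : min j0 m = j0 := min_eq_left hj0m'
        simp only [hmin]
        rw [hesq_eq j0 hj0m', hj0, hpx]
      have hsplit : {j : ℕ | j ≤ m + 1} = {j | j ≤ m} ∪ {m + 1} := by
        ext j; simp; omega
      have hD : (↑D : Set (Fin n →₀ ℕ)) = ↑D' ∪ {x} := by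
        rw [hD']
        ext y
        simp only [Set.mem_union, Finset.coe_erase, Set.mem_diff, Set.mem_singleton_iff,
          Finset.mem_coe]
        constructor
        · intro hy
          by_cases h : y = x
          · exact Or.inr h
          · exact Or.inl ⟨hy, h⟩
        · rintro (⟨hy, _⟩ | rfl)
          · exact hy
          · exact hxD
      rw [hD, hsplit, Set.image_union,
        Set.image_congr (fun a (ha : a ∈ {j | j ≤ m}) => hesq_eq a ha), ← hc',
        Set.image_singleton, htop]

end MonAux

namespace MonAux

variable {n : ℕ} {F : Type} [Field F]

lemma mono_mem_of_support {I : Ideal (MvPolynomial (Fin n) F)}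
    (hI : ∃ S : Set (Fin n →₀ ℕ), I = Ideal.span ((fun a => (monomial a (1 : F))) '' S))
    {p : MvPolynomial (Fin n) F} (hp : p ∈ I) {m : Fin n →₀ ℕ} (hm : m ∈ p.support) :
    (monomial m (1:F)) ∈ I := by
  obtain ⟨S, rfl⟩ := hI
  obtain ⟨s, hs, hsm⟩ := (mem_ideal_span_monomial_image.mp hp) m hm
  refine mem_ideal_span_monomial_image.mpr ?_
  intro xi hxi
  have hxm : m = xi := by
    simpa [support_monomial] using hxi
  subst hxm
  exact ⟨s, hs, hsm⟩

lemma mono_mem_mono {I : Ideal (MvPolynomial (Fin n) F)}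
    (hI : ∃ S : Set (Fin n →₀ ℕ), I = Ideal.span ((fun a => (monomial a (1 : F))) '' S))
    {a b : Fin n →₀ ℕ} (hab : a ≤ b) (ha : monomial a (1:F) ∈ I) :
    monomial b (1:F) ∈ I := by
  obtain ⟨S, rfl⟩ := hI
  obtain ⟨s, hs, hsa⟩ := (mem_ideal_span_monomial_image.mp ha) a (by simp [support_monomial])
  refine mem_ideal_span_monomial_image.mpr ?_
  intro xi hxi
  have hxb : b = xi := by simpa [support_monomial] using hxi
  subst hxb
  exact ⟨s, hs, hsa.trans hab⟩

lemma span_eq {I : Ideal (MvPolynomial (Fin n) F)}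
    (hI : ∃ S : Set (Fin n →₀ ℕ), I = Ideal.span ((fun a => (monomial a (1 : F))) '' S)) :
    I = Ideal.span ((fun a => (monomial a (1 : F))) '' {a | monomial a (1:F) ∈ I}) := by
  refine le_antisymm ?_ ?_
  · obtain ⟨S, hS⟩ := hI
    rw [hS]
    refine Ideal.span_mono (Set.image_mono ?_)
    intro s hs
    exact Ideal.subset_span ⟨s, hs, rfl⟩
  · rw [Ideal.span_le]
    rintro x ⟨a, ha, rfl⟩
    exact ha

lemma mk_mono_smul {I : Ideal (MvPolynomial (Fin n) F)} (b : Fin n →₀ ℕ) (c : F) :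
    Ideal.Quotient.mk I (monomial b c) = c • Ideal.Quotient.mk I (monomial b (1:F)) := by
  have h : Ideal.Quotient.mk I (monomial b c) = Ideal.Quotient.mkₐ F I (c • monomial b (1:F)) := by
    rw [smul_monomial, smul_eq_mul, mul_one]; rfl
  rw [h, map_smul]; rfl

lemma linind {I : Ideal (MvPolynomial (Fin n) F)}
    (hI : ∃ S : Set (Fin n →₀ ℕ), I = Ideal.span ((fun a => (monomial a (1 : F))) '' S)) :
    LinearIndependent F (fun a : {a : Fin n →₀ ℕ | monomial a (1:F) ∉ I} =>
      Ideal.Quotient.mk I (monomial (a : Fin n →₀ ℕ) (1:F))) := by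
  rw [linearIndependent_iff]
  intro l hl
  set q : MvPolynomial (Fin n) F :=
    ∑ b ∈ l.support, monomial (b : Fin n →₀ ℕ) (l b) with hq
  have hmkq : Ideal.Quotient.mk I q = 0 := by
    rw [hq, map_sum, ← hl, Finsupp.linearCombination_apply, Finsupp.sum]
    exact Finset.sum_congr rfl fun b _ => mk_mono_smul _ _
  have hqI : q ∈ I := Ideal.Quotient.eq_zero_iff_mem.mp hmkq
  ext a
  by_contra hla
  have haS : a ∈ l.support := Finsupp.mem_support_iff.mpr hla
  have hco : coeff (↑a) q = l a := by
    rw [hq, coeff_sum]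
    rw [Finset.sum_eq_single_of_mem a haS]
    · rw [coeff_monomial, if_pos rfl]
    · intro b _ hba
      rw [coeff_monomial, if_neg (fun h => hba (Subtype.ext h))]
  have hsup : (↑a : Fin n →₀ ℕ) ∈ q.support := by
    rw [mem_support_iff, hco]
    exact hla
  exact a.2 (mono_mem_of_support hI hqI hsup)

lemma spans {I : Ideal (MvPolynomial (Fin n) F)} :
    ⊤ ≤ Submodule.span F (Set.range (fun a : {a : Fin n →₀ ℕ | monomial a (1:F) ∉ I} =>
      Ideal.Quotient.mk I (monomial (a : Fin n →₀ ℕ) (1:F)))) := by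
  rintro z -
  obtain ⟨p, rfl⟩ := Ideal.Quotient.mk_surjective z
  have hp : Ideal.Quotient.mk I p =
      ∑ m ∈ p.support, coeff m p • Ideal.Quotient.mk I (monomial m (1:F)) := by
    conv_lhs => rw [p.as_sum]
    rw [map_sum]
    exact Finset.sum_congr rfl fun m _ => mk_mono_smul _ _
  rw [hp]
  refine Submodule.sum_mem _ fun m _ => ?_
  by_cases hm : monomial m (1:F) ∈ I
  · rw [Ideal.Quotient.eq_zero_iff_mem.mpr hm, smul_zero]
    exact zero_mem _
  · exact Submodule.smul_mem _ _ (Submodule.subset_span ⟨⟨m, hm⟩, rfl⟩)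

lemma card_D {I : Ideal (MvPolynomial (Fin n) F)} {K : ℕ} (hK : K ≠ 0)
    (hI : ∃ S : Set (Fin n →₀ ℕ), I = Ideal.span ((fun a => (monomial a (1 : F))) '' S))
    (hfr : Module.finrank F (MvPolynomial (Fin n) F ⧸ I) = K) :
    ∃ hfin : {a : Fin n →₀ ℕ | monomial a (1:F) ∉ I}.Finite, hfin.toFinset.card = K := by
  set D := {a : Fin n →₀ ℕ | monomial a (1:F) ∉ I} with hD
  have b : Module.Basis D F (MvPolynomial (Fin n) F ⧸ I) := Module.Basis.mk (linind hI) spans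
  have hrk : Module.rank F (MvPolynomial (Fin n) F ⧸ I) = K := by
    have := hfr
    rw [Module.finrank] at this
    exact (Cardinal.toNat_eq_iff hK).mp this
  have hmk : (Cardinal.mk D) = K := by rw [b.mk_eq_rank'', hrk]
  have hfin : D.Finite := Cardinal.lt_aleph0_iff_set_finite.mp (by
    rw [hmk]; exact Cardinal.nat_lt_aleph0 K)
  refine ⟨hfin, ?_⟩
  rw [← Set.ncard_eq_toFinset_card D hfin, ← Nat.card_coe_set_eq,
    show Nat.card ↥D = (Cardinal.mk ↥D).toNat from rfl, hmk, Cardinal.toNat_natCast]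


lemma arith (n K : ℕ) (hn : 1 ≤ n) (hK : 2 ≤ K) :
    ((K-1)*n)^(K-1) ≤ K^n * (K+n-2)^((n-1)*(K-1)) * (2*K-3)^(K-2) := by
  have h1 : (K-1)^(K-1) ≤ K * (2*K-3)^(K-2) := by
    have e1 : K - 1 = (K-2) + 1 := by omega
    calc (K-1)^(K-1) = (K-1)^(K-2) * (K-1) := by rw [← pow_succ, ← e1]
      _ ≤ (2*K-3)^(K-2) * K :=
          Nat.mul_le_mul (Nat.pow_le_pow_left (by omega) _) (by omega)
      _ = K * (2*K-3)^(K-2) := by ring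
  have h2 : n^(K-1) ≤ (K+n-2)^((n-1)*(K-1)) := by
    rcases Nat.eq_or_lt_of_le hn with h | h
    · simp [← h]
    · calc n^(K-1) ≤ (K+n-2)^(K-1) := Nat.pow_le_pow_left (by omega) _
        _ ≤ (K+n-2)^((n-1)*(K-1)) :=
            Nat.pow_le_pow_right (by omega) (Nat.le_mul_of_pos_left _ (by omega))
  have hKn : K ≤ K^n := Nat.le_self_pow (by omega) K
  calc ((K-1)*n)^(K-1) = (K-1)^(K-1) * n^(K-1) := mul_pow _ _ _
    _ ≤ (K * (2*K-3)^(K-2)) * (K+n-2)^((n-1)*(K-1)) := Nat.mul_le_mul h1 h2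
    _ = K * (K+n-2)^((n-1)*(K-1)) * (2*K-3)^(K-2) := by ring
    _ ≤ K^n * (K+n-2)^((n-1)*(K-1)) * (2*K-3)^(K-2) :=
        Nat.mul_le_mul_right _ (Nat.mul_le_mul_right _ hKn)

end MonAux

/-- An ideal of `F[X_1,…,X_n]` is a *monomial ideal* if it is generated by
a set of monomials `X^a = X_1^{a_1} ⋯ X_n^{a_n}`. -/
def IsMonomialIdeal {n : ℕ} {F : Type} [Field F] (I : Ideal (MvPolynomial (Fin n) F)) : Prop :=
  ∃ S : Set (Fin n →₀ ℕ), I = Ideal.span ((fun a => (monomial a (1 : F))) '' S)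

/-- For `K ≥ 2`, the number of monomial ideals `I` with `dim F[X]/I = K` is at most
`K^n (K+n-2)^{(n-1)(K-1)} (2K-3)^{K-2}`. -/
theorem statement_1 (F : Type) [Field F] (n K : ℕ) (hn : 1 ≤ n) (hK : 2 ≤ K) :
    {I : Ideal (MvPolynomial (Fin n) F) | IsMonomialIdeal I ∧
        Module.finrank F (MvPolynomial (Fin n) F ⧸ I) = K}.ncard
      ≤ K ^ n * (K + n - 2) ^ ((n - 1) * (K - 1)) * (2 * K - 3) ^ (K - 2) := by
  classical
  set S := {I : Ideal (MvPolynomial (Fin n) F) | IsMonomialIdeal I ∧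
      Module.finrank F (MvPolynomial (Fin n) F ⧸ I) = K} with hS
  have key : ∀ I : S, ∃ c : ℕ → ℕ × Fin n, (∀ j, (c j).1 ≤ j) ∧
      {a : Fin n →₀ ℕ | monomial a (1:F) ∉ I.1} = MonAux.esq c '' {j | j ≤ K - 1} := by
    intro I
    obtain ⟨hmon, hfr⟩ := I.2
    obtain ⟨hfin, hcard⟩ := MonAux.card_D (by omega) hmon hfr
    have hdown : ∀ a b : Fin n →₀ ℕ, a ≤ b → b ∈ hfin.toFinset → a ∈ hfin.toFinset := by
      intro a b hab hb
      simp only [Set.Finite.mem_toFinset, Set.mem_setOf_eq] at *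
      intro haI
      exact hb (MonAux.mono_mem_mono hmon hab haI)
    obtain ⟨c, h1, h2⟩ := MonAux.exists_code hn (K-1) hfin.toFinset hdown (by omega)
    refine ⟨c, h1, ?_⟩
    rw [← h2, Set.Finite.coe_toFinset]
  choose c hbd hcode using key
  set f : S → (Fin (K-1) → Fin (K-1) × Fin n) := fun I j =>
    (⟨(c I j.1).1, lt_of_le_of_lt (hbd I j.1) j.2⟩, (c I j.1).2) with hf
  have hfinj : Function.Injective f := by
    intro I I' hff
    have hcc : ∀ i, i < K - 1 → c I i = c I' i := by
      intro i hi
      have h := congrFun hff ⟨i, hi⟩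
      simp only [hf, Prod.mk.injEq, Fin.mk.injEq] at h
      exact Prod.ext h.1 h.2
    have hesq : ∀ j ∈ {j : ℕ | j ≤ K - 1}, MonAux.esq (c I) j = MonAux.esq (c I') j :=
      fun j hj => MonAux.esq_congr _ _ j (fun i hi => hcc i (by
        have : j ≤ K - 1 := hj
        omega))
    have hDeq : {a : Fin n →₀ ℕ | monomial a (1:F) ∉ I.1}
        = {a | monomial a (1:F) ∉ I'.1} := by
      rw [hcode I, hcode I', Set.image_congr hesq]
    apply Subtype.ext
    rw [MonAux.span_eq I.2.1, MonAux.span_eq I'.2.1]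
    have hmem : {a : Fin n →₀ ℕ | monomial a (1:F) ∈ I.1}
        = {a | monomial a (1:F) ∈ I'.1} := by
      ext a
      have := Set.ext_iff.mp hDeq a
      simp only [Set.mem_setOf_eq] at this ⊢
      tauto
    rw [hmem]
  have hle : S.ncard ≤ ((K-1)*n)^(K-1) := by
    rw [← Nat.card_coe_set_eq]
    calc Nat.card S ≤ Nat.card (Fin (K-1) → Fin (K-1) × Fin n) :=
          Nat.card_le_card_of_injective f hfinj
      _ = ((K-1)*n)^(K-1) := by
          simp [Nat.card_eq_fintype_card, Fintype.card_fun]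
  exact hle.trans (MonAux.arith n K hn hK)
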